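/- On ℝ⁶ with coordinates (γ₁,γ₂,γ₃,M₁,M₂,M₃), let P₁, P₂, P₃ be the antisymmetric matrix fields with upper-triangular entries: P₁: (1,2) ↦ −M₃, (1,3) ↦ M₂, (1,5) ↦ −a/2, (2,3) ↦ −M₁, (2,4) ↦ a/2, others 0; P₂: (1,2) ↦ 2γ₃, (1,3) ↦ −2γ₂, (2,3) ↦ 2γ₁, (4,5) ↦ −a, others 0; P₃: (i,j) ↦ 0 for i,j ≤ 3, (i,j+3) ↦ ∑_k ε_{ijk}γ_k, (i+3,j+3) ↦ ∑_k ε_{ijk}M_k for i,j ∈ {1,2,3}. Then P₁, P₂, P₃ are mutually compatible Poisson bivectors: for all λ₁, λ₂, λ₃ ∈ ℝ the matrix field P = λ₁P₁ + λ₂P₂ + λ₃P₃ satisfies the Jacobi identity ∑_{l=1}^{6} ( P_{li} ∂P_{jk}/∂x_l + P_{lj} ∂P_{ki}/∂x_l + P_{lk} ∂P_{ij}/∂x_l ) = 0 for all i, j, k and all points. -/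

import Mathlib

noncomputable section

open scoped BigOperators

/-- Partial derivative of `f` in the `i`-th coordinate direction at `x`. -/
def pd {n : ℕ} (i : Fin n) (f : (Fin n → ℝ) → ℝ) (x : Fin n → ℝ) : ℝ :=
  fderiv ℝ f x (Pi.single i 1)

/-- The Lagrange vector field on `ℝ⁶` with coordinates
`(x₁,…,x₆) = (γ₁,γ₂,γ₃,M₁,M₂,M₃)`. -/
def lagX (a : ℝ) (x : Fin 6 → ℝ) : Fin 6 → ℝ :=
  ![2 * (x 2 * x 4 - x 1 * x 5), 2 * (x 0 * x 5 - x 2 * x 3),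
    2 * (x 1 * x 3 - x 0 * x 4), -(a * x 1), a * x 0, 0]

/-- `f₁ = γ₁² + γ₂² + γ₃²`. -/
def lagF₁ (x : Fin 6 → ℝ) : ℝ := x 0 ^ 2 + x 1 ^ 2 + x 2 ^ 2

/-- `f₂ = γ₁M₁ + γ₂M₂ + γ₃M₃`. -/
def lagF₂ (x : Fin 6 → ℝ) : ℝ := x 0 * x 3 + x 1 * x 4 + x 2 * x 5

/-- `f₃ = M₁² + M₂² + M₃² + aγ₃`. -/
def lagF₃ (a : ℝ) (x : Fin 6 → ℝ) : ℝ := x 3 ^ 2 + x 4 ^ 2 + x 5 ^ 2 + a * x 2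

/-- `f₄ = M₃`. -/
def lagF₄ (x : Fin 6 → ℝ) : ℝ := x 5

/-- Contraction of a matrix field with the gradient of a function:
`(P∇f)_i = ∑_j P_{ij} ∂f/∂x_j`. -/
def Pgrad {n : ℕ} (P : (Fin n → ℝ) → Matrix (Fin n) (Fin n) ℝ)
    (f : (Fin n → ℝ) → ℝ) (x : Fin n → ℝ) (i : Fin n) : ℝ :=
  ∑ j, P x i j * pd j f x

/-- Lie derivative of a (2,0) tensor (matrix field) `P` along the vector field `X`:
`(L_X P)_{ij} = ∑_k (X_k ∂P_{ij}/∂x_k − P_{kj} ∂X_i/∂x_k − P_{ik} ∂X_j/∂x_k)`. -/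
def matLie {n : ℕ} (X : (Fin n → ℝ) → Fin n → ℝ)
    (P : (Fin n → ℝ) → Matrix (Fin n) (Fin n) ℝ) (x : Fin n → ℝ) (i j : Fin n) : ℝ :=
  ∑ k, (X x k * pd k (fun y => P y i j) x - P x k j * pd k (fun y => X y i) x
        - P x i k * pd k (fun y => X y j) x)

/-- The Jacobiator of an antisymmetric matrix field; it vanishes identically iff `P`
satisfies the Jacobi identity (i.e. is a Poisson bivector). -/
def jacobiator {n : ℕ} (P : (Fin n → ℝ) → Matrix (Fin n) (Fin n) ℝ)
    (x : Fin n → ℝ) (i j k : Fin n) : ℝ :=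
  ∑ l, (P x l i * pd l (fun y => P y j k) x + P x l j * pd l (fun y => P y k i) x
        + P x l k * pd l (fun y => P y i j) x)

/-- The invariant Poisson bivector `P₁` of the Lagrange case: upper entries
`(1,2) ↦ −M₃`, `(1,3) ↦ M₂`, `(1,5) ↦ −a/2`, `(2,3) ↦ −M₁`, `(2,4) ↦ a/2`. -/
def lagP₁ (a : ℝ) (x : Fin 6 → ℝ) : Matrix (Fin 6) (Fin 6) ℝ :=
  !![0, -(x 5), x 4, 0, -(a / 2), 0;
     x 5, 0, -(x 3), a / 2, 0, 0;
     -(x 4), x 3, 0, 0, 0, 0;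
     0, -(a / 2), 0, 0, 0, 0;
     a / 2, 0, 0, 0, 0, 0;
     0, 0, 0, 0, 0, 0]

/-- The invariant Poisson bivector `P₂` of the Lagrange case: upper entries
`(1,2) ↦ 2γ₃`, `(1,3) ↦ −2γ₂`, `(2,3) ↦ 2γ₁`, `(4,5) ↦ −a`. -/
def lagP₂ (a : ℝ) (x : Fin 6 → ℝ) : Matrix (Fin 6) (Fin 6) ℝ :=
  !![0, 2 * x 2, -(2 * x 1), 0, 0, 0;
     -(2 * x 2), 0, 2 * x 0, 0, 0, 0;
     2 * x 1, -(2 * x 0), 0, 0, 0, 0;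
     0, 0, 0, 0, -a, 0;
     0, 0, 0, a, 0, 0;
     0, 0, 0, 0, 0, 0]

/-- The canonical Lie–Poisson bivector `P₃ = P_c` on `e*(3)`:
`(i,j) ↦ 0` for `i,j ≤ 3`, `(i,j+3) ↦ ∑_k ε_{ijk}γ_k`, `(i+3,j+3) ↦ ∑_k ε_{ijk}M_k`. -/
def lagP₃ (x : Fin 6 → ℝ) : Matrix (Fin 6) (Fin 6) ℝ :=
  !![0, 0, 0, 0, x 2, -(x 1);
     0, 0, 0, -(x 2), 0, x 0;
     0, 0, 0, x 1, -(x 0), 0;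
     0, x 2, -(x 1), 0, x 5, -(x 4);
     -(x 2), 0, x 0, -(x 5), 0, x 3;
     x 1, -(x 0), 0, x 4, -(x 3), 0]


@[simp] lemma cons_val_five' {α : Type*} {m : ℕ} (x : α) (u : Fin (m + 5) → α) :
    Matrix.vecCons x u 5 =
      Matrix.vecHead (Matrix.vecTail (Matrix.vecTail (Matrix.vecTail (Matrix.vecTail u)))) := rfl

@[simp] lemma vecHead_constFun {α : Type*} {m : ℕ} (c : α) :
    Matrix.vecHead (fun _ : Fin (m + 1) => c) = c := rfl

@[simp] lemma vecTail_constFun {α : Type*} {m : ℕ} (c : α) :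
    Matrix.vecTail (fun _ : Fin (m + 1) => c) = fun _ => c := rfl

/-- Derivative of an affine function of the coordinates. -/
lemma pd_affine {n : ℕ} (l : Fin n) (c : ℝ) (w : Fin n → ℝ) (x : Fin n → ℝ) :
    pd l (fun y => c + ∑ m, w m * y m) x = w l := by
  have h : HasFDerivAt (fun y : Fin n → ℝ => c + ∑ m, w m * y m)
      (0 + ∑ m, w m • (ContinuousLinearMap.proj m : (Fin n → ℝ) →L[ℝ] ℝ)) x :=
    (hasFDerivAt_const c x).add
      (HasFDerivAt.fun_sum (fun m _ => (hasFDerivAt_apply m x).const_mul (w m)))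
  rw [pd, h.fderiv]
  simp [ContinuousLinearMap.proj_apply, Pi.single_apply, mul_ite]

/-- Constant part of the combined bivector. -/
def lagC (a l₁ l₂ : ℝ) : Matrix (Fin 6) (Fin 6) ℝ :=
  !![0, 0, 0, 0, -(l₁ * (a / 2)), 0;
     0, 0, 0, l₁ * (a / 2), 0, 0;
     0, 0, 0, 0, 0, 0;
     0, -(l₁ * (a / 2)), 0, 0, -(l₂ * a), 0;
     l₁ * (a / 2), 0, 0, l₂ * a, 0, 0;
     0, 0, 0, 0, 0, 0]

/-- Gradient (linear coefficients) of the combined bivector entries. -/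
def lagW (l₁ l₂ l₃ : ℝ) : Matrix (Fin 6) (Fin 6) (Fin 6 → ℝ) :=
  !![0, ![0,0,2*l₂,0,0,-l₁], ![0,-(2*l₂),0,0,l₁,0], 0, ![0,0,l₃,0,0,0], ![0,-l₃,0,0,0,0];
     ![0,0,-(2*l₂),0,0,l₁], 0, ![2*l₂,0,0,-l₁,0,0], ![0,0,-l₃,0,0,0], 0, ![l₃,0,0,0,0,0];
     ![0,2*l₂,0,0,-l₁,0], ![-(2*l₂),0,0,l₁,0,0], 0, ![0,l₃,0,0,0,0], ![-l₃,0,0,0,0,0], 0;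
     0, ![0,0,l₃,0,0,0], ![0,-l₃,0,0,0,0], 0, ![0,0,0,0,0,l₃], ![0,0,0,0,-l₃,0];
     ![0,0,-l₃,0,0,0], 0, ![l₃,0,0,0,0,0], ![0,0,0,0,0,-l₃], 0, ![0,0,0,l₃,0,0];
     ![0,l₃,0,0,0,0], ![-l₃,0,0,0,0,0], 0, ![0,0,0,0,l₃,0], ![0,0,0,-l₃,0,0], 0]

set_option maxHeartbeats 4000000 in
lemma lagEntry (a l₁ l₂ l₃ : ℝ) (y : Fin 6 → ℝ) (i j : Fin 6) :
    (l₁ • lagP₁ a y + l₂ • lagP₂ a y + l₃ • lagP₃ y) i j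
      = lagC a l₁ l₂ i j + ∑ m, lagW l₁ l₂ l₃ i j m * y m := by
  fin_cases i <;> fin_cases j <;>
    simp [lagP₁, lagP₂, lagP₃, lagC, lagW, Fin.sum_univ_six,
      Matrix.add_apply, Matrix.smul_apply, smul_eq_mul] <;> ring

lemma lagPd (a l₁ l₂ l₃ : ℝ) (x : Fin 6 → ℝ) (l i j : Fin 6) :
    pd l (fun y => (l₁ • lagP₁ a y + l₂ • lagP₂ a y + l₃ • lagP₃ y) i j) x
      = lagW l₁ l₂ l₃ i j l := by
  have h : (fun y => (l₁ • lagP₁ a y + l₂ • lagP₂ a y + l₃ • lagP₃ y) i j)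
      = fun y => lagC a l₁ l₂ i j + ∑ m, lagW l₁ l₂ l₃ i j m * y m :=
    funext fun y => lagEntry a l₁ l₂ l₃ y i j
  rw [h, pd_affine]

set_option maxHeartbeats 10000000 in
lemma lagJac0 (a l₁ l₂ l₃ : ℝ) (x : Fin 6 → ℝ) (j k : Fin 6) :
    jacobiator (fun y => l₁ • lagP₁ a y + l₂ • lagP₂ a y + l₃ • lagP₃ y) x 0 j k = 0 := by
  simp only [jacobiator, lagPd, lagEntry a l₁ l₂ l₃ x]
  fin_cases j <;> fin_cases k <;>
    simp [lagC, lagW, Fin.sum_univ_six] <;> ring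

set_option maxHeartbeats 10000000 in
lemma lagJac1 (a l₁ l₂ l₃ : ℝ) (x : Fin 6 → ℝ) (j k : Fin 6) :
    jacobiator (fun y => l₁ • lagP₁ a y + l₂ • lagP₂ a y + l₃ • lagP₃ y) x 1 j k = 0 := by
  simp only [jacobiator, lagPd, lagEntry a l₁ l₂ l₃ x]
  fin_cases j <;> fin_cases k <;>
    simp [lagC, lagW, Fin.sum_univ_six] <;> ring

set_option maxHeartbeats 10000000 in
lemma lagJac2 (a l₁ l₂ l₃ : ℝ) (x : Fin 6 → ℝ) (j k : Fin 6) :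
    jacobiator (fun y => l₁ • lagP₁ a y + l₂ • lagP₂ a y + l₃ • lagP₃ y) x 2 j k = 0 := by
  simp only [jacobiator, lagPd, lagEntry a l₁ l₂ l₃ x]
  fin_cases j <;> fin_cases k <;>
    simp [lagC, lagW, Fin.sum_univ_six] <;> ring

set_option maxHeartbeats 10000000 in
lemma lagJac3 (a l₁ l₂ l₃ : ℝ) (x : Fin 6 → ℝ) (j k : Fin 6) :
    jacobiator (fun y => l₁ • lagP₁ a y + l₂ • lagP₂ a y + l₃ • lagP₃ y) x 3 j k = 0 := by
  simp only [jacobiator, lagPd, lagEntry a l₁ l₂ l₃ x]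
  fin_cases j <;> fin_cases k <;>
    simp [lagC, lagW, Fin.sum_univ_six] <;> ring

set_option maxHeartbeats 10000000 in
lemma lagJac4 (a l₁ l₂ l₃ : ℝ) (x : Fin 6 → ℝ) (j k : Fin 6) :
    jacobiator (fun y => l₁ • lagP₁ a y + l₂ • lagP₂ a y + l₃ • lagP₃ y) x 4 j k = 0 := by
  simp only [jacobiator, lagPd, lagEntry a l₁ l₂ l₃ x]
  fin_cases j <;> fin_cases k <;>
    simp [lagC, lagW, Fin.sum_univ_six] <;> ring

set_option maxHeartbeats 10000000 in
lemma lagJac5 (a l₁ l₂ l₃ : ℝ) (x : Fin 6 → ℝ) (j k : Fin 6) :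
    jacobiator (fun y => l₁ • lagP₁ a y + l₂ • lagP₂ a y + l₃ • lagP₃ y) x 5 j k = 0 := by
  simp only [jacobiator, lagPd, lagEntry a l₁ l₂ l₃ x]
  fin_cases j <;> fin_cases k <;>
    simp [lagC, lagW, Fin.sum_univ_six] <;> ring

/-- `P₁`, `P₂`, `P₃` are mutually compatible Poisson bivectors: every real linear
combination `λ₁P₁ + λ₂P₂ + λ₃P₃` satisfies the Jacobi identity. -/
theorem lagrange_bivectors_compatible (a l₁ l₂ l₃ : ℝ) (x : Fin 6 → ℝ)
    (i j k : Fin 6) :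
    jacobiator (fun y => l₁ • lagP₁ a y + l₂ • lagP₂ a y + l₃ • lagP₃ y) x i j k = 0 := by
  fin_cases i
  · exact lagJac0 a l₁ l₂ l₃ x j k
  · exact lagJac1 a l₁ l₂ l₃ x j k
  · exact lagJac2 a l₁ l₂ l₃ x j k
  · exact lagJac3 a l₁ l₂ l₃ x j k
  · exact lagJac4 a l₁ l₂ l₃ x j k
  · exact lagJac5 a l₁ l₂ l₃ x j k
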